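/- arXiv:1105.3299 — 5 statements merged into one kernel-verified Lean document; each statement's English description precedes it below -/
import Mathlib

section
/- For every δ ∈ [0, 2/3) and every ω ∈ [0,1], ω(1−ω) + δ(1 − 3ω/4)² − (1−δ)ω² ≤ 4(1 + 5δ − 4δ²)/(32 − 25δ). -/
theorem omega_bound' (δ ω : ℝ) (h0 : 0 ≤ δ) (h1 : δ < 2 / 3)
    (hω0 : 0 ≤ ω) (hω1 : ω ≤ 1) :
    ω * (1 - ω) + δ * (1 - 3 * ω / 4) ^ 2 - (1 - δ) * ω ^ 2 ≤
      4 * (1 + 5 * δ - 4 * δ ^ 2) / (32 - 25 * δ) := by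
  have hpos : (0:ℝ) < 32 - 25 * δ := by linarith
  rw [le_div_iff₀ hpos]
  nlinarith [sq_nonneg (ω * (32 - 25 * δ) - (8 - 12 * δ)), sq_nonneg ω, sq_nonneg δ]
end

section
/- For every δ ∈ [0, 1] and every ω ∈ [0,1], (2−δ)ω(1−ω) + δ(1 − 3ω/4)² ≤ 8(2−δ)/(32 − 25δ). -/
theorem omega_bound'' (δ ω : ℝ) (h0 : 0 ≤ δ) (h1 : δ ≤ 1)
    (hω0 : 0 ≤ ω) (hω1 : ω ≤ 1) :
    (2 - δ) * ω * (1 - ω) + δ * (1 - 3 * ω / 4) ^ 2 ≤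
      8 * (2 - δ) / (32 - 25 * δ) := by
  have hd : (0:ℝ) < 32 - 25 * δ := by linarith
  rw [le_div_iff₀ hd]
  nlinarith [sq_nonneg ((32 - 25*δ)*ω - (16 - 20*δ)), hd, mul_pos hd hd]
end

section
/- For every 0 < q ≤ 1, every δ ∈ [0,1), and every ω ∈ [0,1], ω^{(2−q)/q}(1−ω) + δ − (1−δ)ω^{2/q} ≤ δ + (q/2^{2/q})·((2−q)/(2−δ))^{2/q − 1}, with the maximum over ω attained at ω = (2−q)/(2(2−δ)). -/
open Real

lemma aux_geom (a c t : ℝ) (ha : 0 < a) (hc : 0 < c) (ht : 0 ≤ t) :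
    t ^ a * (1 - c * t) ≤ (a / ((a + 1) * c)) ^ a * (1 / (a + 1)) := by
  have ha1 : 0 < a + 1 := by linarith
  set ω := a / ((a + 1) * c) with hωdef
  have hωpos : 0 < ω := div_pos ha (mul_pos ha1 hc)
  by_cases hct : 1 - c * t ≤ 0
  · exact le_trans (mul_nonpos_of_nonneg_of_nonpos (Real.rpow_nonneg ht a) hct)
      (le_of_lt (mul_pos (Real.rpow_pos_of_pos hωpos a) (by positivity)))
  push_neg at hct
  set p1 := t / ω with hp1
  set p2 := (a + 1) * (1 - c * t) with hp2
  have hp1n : 0 ≤ p1 := by positivity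
  have hp2n : 0 ≤ p2 := by positivity
  have hgm : p1 ^ (a / (a + 1)) * p2 ^ (1 / (a + 1)) ≤
      (a / (a + 1)) * p1 + (1 / (a + 1)) * p2 :=
    Real.geom_mean_le_arith_mean2_weighted (by positivity) (by positivity) hp1n hp2n
      (by field_simp)
  have hsum : (a / (a + 1)) * p1 + (1 / (a + 1)) * p2 = 1 := by
    rw [hp1, hp2, hωdef]
    field_simp
    ring
  rw [hsum] at hgm
  have h2 : (p1 ^ (a / (a + 1)) * p2 ^ (1 / (a + 1))) ^ (a + 1) ≤ 1 :=
    Real.rpow_le_one (by positivity) hgm ha1.le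
  have h3 : (p1 ^ (a / (a + 1)) * p2 ^ (1 / (a + 1))) ^ (a + 1) = p1 ^ a * p2 := by
    rw [Real.mul_rpow (by positivity) (by positivity), ← Real.rpow_mul hp1n,
      ← Real.rpow_mul hp2n]
    have e1 : a / (a + 1) * (a + 1) = a := by field_simp
    have e2 : 1 / (a + 1) * (a + 1) = 1 := by field_simp
    rw [e1, e2, Real.rpow_one]
  rw [h3] at h2
  have hp1a : p1 ^ a = t ^ a / ω ^ a := Real.div_rpow ht hωpos.le a
  rw [hp1a, hp2] at h2
  have hωa : 0 < ω ^ a := Real.rpow_pos_of_pos hωpos a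
  rw [div_mul_eq_mul_div, div_le_one hωa] at h2
  rw [mul_one_div, le_div_iff₀ ha1]
  nlinarith [h2]

theorem lq_omega_bound (q δ ω : ℝ) (hq0 : 0 < q) (hq1 : q ≤ 1)
    (hδ0 : 0 ≤ δ) (hδ1 : δ < 1) (hω0 : 0 ≤ ω) (hω1 : ω ≤ 1) :
    ω ^ ((2 - q) / q) * (1 - ω) + δ - (1 - δ) * ω ^ (2 / q) ≤
        δ + q / 2 ^ (2 / q) * ((2 - q) / (2 - δ)) ^ (2 / q - 1) ∧
      ((2 - q) / (2 * (2 - δ))) ^ ((2 - q) / q) * (1 - (2 - q) / (2 * (2 - δ))) + δ -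
          (1 - δ) * ((2 - q) / (2 * (2 - δ))) ^ (2 / q) =
        δ + q / 2 ^ (2 / q) * ((2 - q) / (2 - δ)) ^ (2 / q - 1) := by
  have hq2 : (0:ℝ) < 2 - q := by linarith
  have hc : (0:ℝ) < 2 - δ := by linarith
  set a := (2 - q) / q with hadef
  set c := 2 - δ with hcdef
  have ha : 0 < a := div_pos hq2 hq0
  have ha1 : a + 1 = 2 / q := by rw [hadef]; field_simp; ring
  have ha1p : 0 < a + 1 := by linarith
  have hωstar : (2 - q) / (2 * (2 - δ)) = a / ((a + 1) * c) := by
    rw [ha1, hadef, hcdef]; field_simp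
  have hrw : ∀ t : ℝ, 0 ≤ t →
      t ^ ((2 - q) / q) * (1 - t) + δ - (1 - δ) * t ^ (2 / q) = t ^ a * (1 - c * t) + δ := by
    intro t ht
    have h2q : t ^ (2 / q) = t ^ a * t := by
      rw [show 2 / q = a + 1 by rw [ha1], Real.rpow_add' ht (by rw [ha1]; positivity),
        Real.rpow_one]
    rw [h2q, ← hadef, hcdef]; ring
  have hRHS : δ + q / 2 ^ (2 / q) * ((2 - q) / (2 - δ)) ^ (2 / q - 1) =
      (a / ((a + 1) * c)) ^ a * (1 / (a + 1)) + δ := by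
    have e1 : 2 / q - 1 = a := by rw [hadef]; field_simp
    have e2 : (2 - q) / (2 - δ) = 2 * (a / ((a + 1) * c)) := by
      rw [ha1, hadef, hcdef]; field_simp
    have e3 : (2:ℝ) ^ (2 / q) = 2 ^ a * 2 := by
      rw [← ha1, Real.rpow_add (by norm_num), Real.rpow_one]
    have e4 : (1:ℝ) / (a + 1) = q / 2 := by rw [ha1]; field_simp
    have hωpos : 0 < a / ((a + 1) * c) := div_pos ha (mul_pos ha1p hc)
    rw [e1, e2, Real.mul_rpow (by norm_num) hωpos.le, e3, e4]
    have h2a : (0:ℝ) < 2 ^ a := Real.rpow_pos_of_pos (by norm_num) a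
    field_simp
    ring
  constructor
  · rw [hrw ω hω0, hRHS]
    have := aux_geom a c ω ha hc hω0
    linarith
  · have hωpos : 0 < (2 - q) / (2 * (2 - δ)) := by positivity
    rw [hrw _ hωpos.le, hRHS, hωstar]
    have : 1 - c * (a / ((a + 1) * c)) = 1 / (a + 1) := by
      field_simp; ring
    rw [this]
end

section
/- Let x ∈ ℝᵈ with coordinates in a block T_j = {js+1, …, js+s} satisfying |x_{js+1}| ≥ … ≥ |x_{js+s}|. Then √s · ‖x_{T_j}‖₂ ≤ ‖x_{T_j}‖₁ + (s/4)(|x_{js+1}| − |x_{js+s}|). -/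
theorem shifting_inequality {s : ℕ} (hs : 0 < s) (y : Fin s → ℝ)
    (hmono : ∀ i j : Fin s, i ≤ j → |y j| ≤ |y i|) :
    Real.sqrt s * Real.sqrt (∑ i, (y i) ^ 2) ≤
      ∑ i, |y i| + (s : ℝ) / 4 * (|y ⟨0, hs⟩| - |y ⟨s - 1, Nat.sub_lt hs one_pos⟩|) := by
  set A := |y ⟨0, hs⟩| with hA
  set B := |y ⟨s - 1, Nat.sub_lt hs one_pos⟩| with hB
  set L := ∑ i, |y i| with hLdef
  have hAB : B ≤ A := hmono _ _ (by simp [Fin.le_def])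
  have hBn : 0 ≤ B := abs_nonneg _
  have hLn : 0 ≤ L := Finset.sum_nonneg fun i _ => abs_nonneg _
  have hQn : 0 ≤ ∑ i, (y i) ^ 2 := Finset.sum_nonneg fun i _ => sq_nonneg _
  have key : ∑ i, (y i) ^ 2 ≤ (A + B) * L - (s : ℝ) * (A * B) := by
    have hpt : ∀ i : Fin s, (y i) ^ 2 ≤ (A + B) * |y i| - A * B := by
      intro i
      have h1 : |y i| ≤ A := hmono ⟨0, hs⟩ i (by simp [Fin.le_def])
      have h2 : B ≤ |y i| := hmono i ⟨s - 1, Nat.sub_lt hs one_pos⟩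
        (by simp [Fin.le_def]; omega)
      nlinarith [sq_abs (y i), mul_nonneg (sub_nonneg.2 h1) (sub_nonneg.2 h2)]
    calc ∑ i, (y i) ^ 2 ≤ ∑ i : Fin s, ((A + B) * |y i| - A * B) :=
          Finset.sum_le_sum fun i _ => hpt i
      _ = (A + B) * L - (s : ℝ) * (A * B) := by
          rw [Finset.sum_sub_distrib, ← Finset.mul_sum]
          simp [Finset.card_univ, mul_comm]
          exact Or.inl hLdef.symm
  have hR : 0 ≤ L + (s : ℝ) / 4 * (A - B) := by
    have : (0:ℝ) ≤ (s : ℝ) / 4 * (A - B) := mul_nonneg (by positivity) (sub_nonneg.2 hAB)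
    linarith
  have hs' : (0:ℝ) ≤ (s : ℝ) := Nat.cast_nonneg s
  calc Real.sqrt s * Real.sqrt (∑ i, (y i) ^ 2)
      = Real.sqrt ((s : ℝ) * ∑ i, (y i) ^ 2) := (Real.sqrt_mul hs' _).symm
    _ ≤ Real.sqrt ((L + (s : ℝ) / 4 * (A - B)) ^ 2) := by
        apply Real.sqrt_le_sqrt
        nlinarith [sq_nonneg (L - (s : ℝ) * (A + 3 * B) / 4),
          mul_nonneg (mul_nonneg hs' hs') (mul_nonneg hBn (sub_nonneg.2 hAB)),
          mul_le_mul_of_nonneg_left key hs']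
    _ = L + (s : ℝ) / 4 * (A - B) := Real.sqrt_sq hR
end

section
/- Let 0 < q ≤ 1 and let x ∈ ℝᵈ restricted to a block T_j of s consecutive indices on which |x_{js+1}| ≥ … ≥ |x_{js+s}|. Then s^{1/q − 1/2} ‖x_{T_j}‖₂ ≤ ‖x_{T_j}‖_q + s^{1/q} (|x_{js+1}| − |x_{js+s}|), where ‖x_{T_j}‖_q = (∑_{i∈T_j} |x_i|^q)^{1/q}. -/
theorem shifting_inequality_lq {s : ℕ} (hs : 0 < s) (q : ℝ)
    (hq0 : 0 < q) (hq1 : q ≤ 1) (y : Fin s → ℝ)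
    (hmono : ∀ i j : Fin s, i ≤ j → |y j| ≤ |y i|) :
    (s : ℝ) ^ (1 / q - 1 / 2) * Real.sqrt (∑ i, (y i) ^ 2) ≤
      (∑ i, |y i| ^ q) ^ (1 / q) +
        (s : ℝ) ^ (1 / q) * (|y ⟨0, hs⟩| - |y ⟨s - 1, Nat.sub_lt hs one_pos⟩|) := by
  set a1 := |y ⟨0, hs⟩| with ha1
  set as := |y ⟨s - 1, Nat.sub_lt hs one_pos⟩| with has
  have ha1nn : 0 ≤ a1 := abs_nonneg _
  have hasnn : 0 ≤ as := abs_nonneg _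
  have hspos : (0:ℝ) < s := Nat.cast_pos.mpr hs
  have h1 : ∀ i : Fin s, |y i| ≤ a1 := fun i => hmono ⟨0, hs⟩ i (by
    simp [Fin.le_def])
  have h2 : ∀ i : Fin s, as ≤ |y i| := fun i => hmono i ⟨s - 1, Nat.sub_lt hs one_pos⟩ (by
    simp [Fin.le_def]; exact Nat.le_sub_one_of_lt i.isLt)
  -- bound on the sum of squares
  have hsum2 : ∑ i, (y i) ^ 2 ≤ (s : ℝ) * a1 ^ 2 := by
    calc ∑ i, (y i) ^ 2 ≤ ∑ _i : Fin s, a1 ^ 2 := by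
          apply Finset.sum_le_sum
          intro i _
          rw [← sq_abs]
          exact pow_le_pow_left₀ (abs_nonneg _) (h1 i) 2
      _ = (s : ℝ) * a1 ^ 2 := by simp [Finset.sum_const, Finset.card_univ]
  have hsqrt : Real.sqrt (∑ i, (y i) ^ 2) ≤ Real.sqrt s * a1 := by
    calc Real.sqrt (∑ i, (y i) ^ 2) ≤ Real.sqrt ((s:ℝ) * a1 ^ 2) := Real.sqrt_le_sqrt hsum2
      _ = Real.sqrt s * a1 := by
          rw [Real.sqrt_mul hspos.le, Real.sqrt_sq ha1nn]
  -- bound on the q-sum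
  have hsumq : (s : ℝ) * as ^ q ≤ ∑ i, |y i| ^ q := by
    calc (s : ℝ) * as ^ q = ∑ _i : Fin s, as ^ q := by
          simp [Finset.sum_const, Finset.card_univ]
      _ ≤ ∑ i, |y i| ^ q := by
          apply Finset.sum_le_sum
          intro i _
          exact Real.rpow_le_rpow hasnn (h2 i) hq0.le
  have hq' : 0 ≤ 1 / q := by positivity
  have hkey : (s : ℝ) ^ (1/q) * as ≤ (∑ i, |y i| ^ q) ^ (1 / q) := by
    have := Real.rpow_le_rpow (by positivity) hsumq hq'
    calc (s : ℝ) ^ (1/q) * as = ((s : ℝ) * as ^ q) ^ (1/q) := by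
          rw [Real.mul_rpow hspos.le (Real.rpow_nonneg hasnn q),
            ← Real.rpow_mul hasnn, mul_one_div, div_self hq0.ne', Real.rpow_one]
      _ ≤ (∑ i, |y i| ^ q) ^ (1 / q) := this
  -- combine
  have hLHS : (s : ℝ) ^ (1 / q - 1 / 2) * Real.sqrt (∑ i, (y i) ^ 2) ≤ (s : ℝ) ^ (1/q) * a1 := by
    calc (s : ℝ) ^ (1 / q - 1 / 2) * Real.sqrt (∑ i, (y i) ^ 2)
        ≤ (s : ℝ) ^ (1 / q - 1 / 2) * (Real.sqrt s * a1) := by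
          apply mul_le_mul_of_nonneg_left hsqrt (Real.rpow_nonneg hspos.le _)
      _ = (s : ℝ) ^ (1/q) * a1 := by
          rw [Real.sqrt_eq_rpow, ← mul_assoc, ← Real.rpow_add hspos]
          norm_num
  calc (s : ℝ) ^ (1 / q - 1 / 2) * Real.sqrt (∑ i, (y i) ^ 2)
      ≤ (s : ℝ) ^ (1/q) * a1 := hLHS
    _ = (s : ℝ) ^ (1/q) * as + (s : ℝ) ^ (1/q) * (a1 - as) := by ring
    _ ≤ (∑ i, |y i| ^ q) ^ (1 / q) + (s : ℝ) ^ (1/q) * (a1 - as) := by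
        linarith [hkey]
end
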